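/- Let n ≥ 2 and let ω ∈ S^{n-1}. The pushforward of the surface measure σ under the map η ↦ ⟪ω, η⟫ from S^{n-1} to ℝ is absolutely continuous with respect to Lebesgue measure on ℝ. -/

import Mathlib

open MeasureTheory

/-- The surface measure on the unit sphere `S^{n-1}` in `ℝⁿ`. -/
noncomputable def sphereMeasure (n : ℕ) : Measure (EuclideanSpace ℝ (Fin n)) :=
  (μH[(n : ℝ) - 1]).restrict (Metric.sphere (0 : EuclideanSpace ℝ (Fin n)) 1)

namespace SphereAC

open Real Set Metric Finset Function

variable {n : ℕ} [NeZero n]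

def Q (w : {i : Fin n // i ≠ 1} → ℝ) : ℝ := (∑ j, (w j) ^ 2) + 1

noncomputable def stereo (s : Bool) (w : {i : Fin n // i ≠ 1} → ℝ) :
    EuclideanSpace ℝ (Fin n) :=
  (WithLp.equiv 2 _).symm fun i =>
    if h : i = 1 then (if s then 1 else -1) * ((Q w - 2) / Q w)
    else 2 * w ⟨i, h⟩ / Q w

lemma stereo_apply_one (s : Bool) (w : {i : Fin n // i ≠ 1} → ℝ) :
    stereo s w 1 = (if s then 1 else -1) * ((Q w - 2) / Q w) := by
  simp [stereo]

lemma stereo_apply_ne (s : Bool) (w : {i : Fin n // i ≠ 1} → ℝ) {i : Fin n} (h : i ≠ 1) :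
    stereo s w i = 2 * w ⟨i, h⟩ / Q w := by
  simp [stereo, h]

noncomputable def psi (h01 : (0 : Fin n) ≠ 1) (s : Bool) (v : {i : Fin n // i ≠ 1} → ℝ) :
    EuclideanSpace ℝ (Fin n) :=
  v ⟨0, h01⟩ • EuclideanSpace.single 0 (1:ℝ) +
    Real.sqrt (1 - (v ⟨0, h01⟩) ^ 2) • stereo s (Function.update v ⟨0, h01⟩ 0)

def D (h01 : (0 : Fin n) ≠ 1) (m : ℕ) : Set ({i : Fin n // i ≠ 1} → ℝ) :=
  {v | (∀ j, |v j| ≤ m) ∧ |v ⟨0, h01⟩| ≤ 1 - 1 / (m + 2)}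

lemma norm_le_card_mul (y : EuclideanSpace ℝ (Fin n)) {c : ℝ} (hc : 0 ≤ c)
    (h : ∀ i, |y i| ≤ c) : ‖y‖ ≤ n * c := by
  rw [EuclideanSpace.norm_eq]
  have h1 : ∑ i, ‖y i‖ ^ 2 ≤ ∑ _i : Fin n, c ^ 2 :=
    Finset.sum_le_sum fun i _ => by
      rw [Real.norm_eq_abs]
      exact pow_le_pow_left₀ (abs_nonneg _) (h i) 2
  have h2 : ∑ _i : Fin n, c ^ 2 = (n : ℝ) * c ^ 2 := by
    rw [Finset.sum_const, Finset.card_univ, Fintype.card_fin, nsmul_eq_mul]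
  have h3 : (n : ℝ) * c ^ 2 ≤ ((n : ℝ) * c) ^ 2 := by
    have hn : (n : ℝ) ≤ (n : ℝ) ^ 2 := by
      have := Nat.le_self_pow (two_ne_zero) n
      exact_mod_cast this
    nlinarith [sq_nonneg c]
  calc Real.sqrt (∑ i, ‖y i‖ ^ 2) ≤ Real.sqrt (((n:ℝ) * c) ^ 2) := by
        apply Real.sqrt_le_sqrt; linarith
  _ = (n : ℝ) * c := Real.sqrt_sq (by positivity)

lemma sqrt_one_sub_sq_lip {δ a b : ℝ} (hδ : 0 < δ) (hδ1 : δ ≤ 1)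
    (ha : |a| ≤ 1 - δ) (hb : |b| ≤ 1 - δ) :
    |Real.sqrt (1 - a ^ 2) - Real.sqrt (1 - b ^ 2)| ≤ 2 / δ * |a - b| := by
  have haa : a ^ 2 ≤ (1 - δ) ^ 2 := by
    rw [← sq_abs]; exact pow_le_pow_left₀ (abs_nonneg _) ha 2
  have hbb : b ^ 2 ≤ (1 - δ) ^ 2 := by
    rw [← sq_abs]; exact pow_le_pow_left₀ (abs_nonneg _) hb 2
  have hkey : δ ^ 2 ≤ 1 - a ^ 2 := by nlinarith
  have hkey' : δ ^ 2 ≤ 1 - b ^ 2 := by nlinarith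
  set fa := Real.sqrt (1 - a ^ 2) with hfa
  set fb := Real.sqrt (1 - b ^ 2) with hfb
  have hfa2 : fa ^ 2 = 1 - a ^ 2 := Real.sq_sqrt (by nlinarith)
  have hfb2 : fb ^ 2 = 1 - b ^ 2 := Real.sq_sqrt (by nlinarith)
  have hfad : δ ≤ fa := by
    rw [hfa, show δ = Real.sqrt (δ ^ 2) from (Real.sqrt_sq hδ.le).symm]
    exact Real.sqrt_le_sqrt hkey
  have hfbd : δ ≤ fb := by
    rw [hfb, show δ = Real.sqrt (δ ^ 2) from (Real.sqrt_sq hδ.le).symm]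
    exact Real.sqrt_le_sqrt hkey'
  have hfact : (fa - fb) * (fa + fb) = (b - a) * (b + a) := by
    have : fa ^ 2 - fb ^ 2 = b ^ 2 - a ^ 2 := by rw [hfa2, hfb2]; ring
    nlinarith [this]
  have habs : |fa - fb| * (fa + fb) = |b - a| * |b + a| := by
    rw [← abs_of_nonneg (by linarith : (0:ℝ) ≤ fa + fb), ← abs_mul, hfact, abs_mul]
  have hba : |b + a| ≤ 2 := by
    calc |b + a| ≤ |b| + |a| := abs_add_le _ _
    _ ≤ 2 := by linarith
  have hfin : |fa - fb| * (2 * δ) ≤ |a - b| * 2 := by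
    have h1 : |fa - fb| * (2 * δ) ≤ |fa - fb| * (fa + fb) := by
      exact mul_le_mul_of_nonneg_left (by linarith [hfad, hfbd] : 2 * δ ≤ fa + fb) (abs_nonneg _)
    rw [habs] at h1
    have h2 : |b - a| * |b + a| ≤ |b - a| * 2 :=
      mul_le_mul_of_nonneg_left hba (abs_nonneg _)
    rw [abs_sub_comm b a] at h2
    rw [abs_sub_comm b a] at h1
    linarith
  rw [div_mul_eq_mul_div, le_div_iff₀ hδ]
  nlinarith [abs_nonneg (fa - fb)]

lemma Q_ge_one (w : {i : Fin n // i ≠ 1} → ℝ) : 1 ≤ Q w := by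
  have : (0:ℝ) ≤ ∑ j, (w j) ^ 2 := Finset.sum_nonneg fun j _ => sq_nonneg _
  rw [Q]; linarith

lemma Q_diff {w₁ w₂ : {i : Fin n // i ≠ 1} → ℝ} {M Dd : ℝ} (hM : 0 ≤ M) (hD : 0 ≤ Dd)
    (hw₁ : ∀ j, |w₁ j| ≤ M) (hw₂ : ∀ j, |w₂ j| ≤ M) (hd : ∀ j, |w₁ j - w₂ j| ≤ Dd) :
    |Q w₁ - Q w₂| ≤ 2 * M * n * Dd := by
  have h1 : Q w₁ - Q w₂ = ∑ j, ((w₁ j) ^ 2 - (w₂ j) ^ 2) := by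
    rw [Finset.sum_sub_distrib, Q, Q]; ring
  rw [h1]
  calc |∑ j, ((w₁ j) ^ 2 - (w₂ j) ^ 2)| ≤ ∑ j, |(w₁ j) ^ 2 - (w₂ j) ^ 2| :=
        Finset.abs_sum_le_sum_abs _ _
  _ ≤ ∑ _j : {i : Fin n // i ≠ 1}, 2 * M * Dd := by
      apply Finset.sum_le_sum
      intro j _
      have hfac : (w₁ j) ^ 2 - (w₂ j) ^ 2 = (w₁ j - w₂ j) * (w₁ j + w₂ j) := by ring
      rw [hfac, abs_mul]
      have hsum : |w₁ j + w₂ j| ≤ 2 * M := by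
        calc |w₁ j + w₂ j| ≤ |w₁ j| + |w₂ j| := abs_add_le _ _
        _ ≤ 2 * M := by linarith [hw₁ j, hw₂ j]
      calc |w₁ j - w₂ j| * |w₁ j + w₂ j| ≤ Dd * (2 * M) :=
            mul_le_mul (hd j) hsum (abs_nonneg _) hD
      _ = 2 * M * Dd := by ring
  _ ≤ 2 * M * n * Dd := by
      rw [Finset.sum_const, Finset.card_univ, nsmul_eq_mul]
      have hcard : (Fintype.card {i : Fin n // i ≠ 1} : ℝ) ≤ n := by
        exact_mod_cast (Fintype.card_subtype_le _).trans (le_of_eq (Fintype.card_fin n))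
      have hmul := mul_le_mul_of_nonneg_right hcard (show (0:ℝ) ≤ 2 * M * Dd by positivity)
      linarith

lemma stereo_bound_coord (s : Bool) (w : {i : Fin n // i ≠ 1} → ℝ) {M : ℝ} (hM : 0 ≤ M)
    (hw : ∀ j, |w j| ≤ M) (i : Fin n) : |stereo s w i| ≤ 2 * M + 3 := by
  have hQ1 := Q_ge_one w
  have hQpos : 0 < Q w := by linarith
  by_cases hi : i = 1
  · subst hi
    rw [stereo_apply_one, abs_mul]
    have h1 : |if s then (1:ℝ) else -1| = 1 := by cases s <;> simp
    rw [h1, one_mul]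
    have h2 : (Q w - 2) / Q w = 1 - 2 / Q w := by field_simp
    have h4 : 2 / Q w ≤ 2 := by rw [div_le_iff₀ hQpos]; linarith
    have h5 : (0:ℝ) ≤ 2 / Q w := by positivity
    rw [h2]
    have : |1 - 2 / Q w| ≤ 3 := abs_le.mpr ⟨by linarith, by linarith⟩
    linarith
  · rw [stereo_apply_ne s w hi, abs_div, abs_of_pos hQpos]
    have h6 : |(2:ℝ) * w ⟨i, hi⟩| ≤ 2 * M := by
      rw [abs_mul, abs_two]
      linarith [hw ⟨i, hi⟩, abs_nonneg (w ⟨i, hi⟩)]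
    have h7 : |(2:ℝ) * w ⟨i, hi⟩| / Q w ≤ |(2:ℝ) * w ⟨i, hi⟩| :=
      div_le_self (abs_nonneg _) hQ1
    linarith

lemma stereo_diff_coord (s : Bool) (w₁ w₂ : {i : Fin n // i ≠ 1} → ℝ) {M Dd : ℝ}
    (hM : 0 ≤ M) (hD : 0 ≤ Dd) (hw₁ : ∀ j, |w₁ j| ≤ M) (hw₂ : ∀ j, |w₂ j| ≤ M)
    (hd : ∀ j, |w₁ j - w₂ j| ≤ Dd) (i : Fin n) :
    |stereo s w₁ i - stereo s w₂ i| ≤ (2 + 2 * M * (2 * M * n) + 2 * (2 * M * n)) * Dd := by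
  have hQ1 := Q_ge_one w₁
  have hQ2 := Q_ge_one w₂
  have hQ1pos : 0 < Q w₁ := by linarith
  have hQ2pos : 0 < Q w₂ := by linarith
  have hQd := Q_diff hM hD hw₁ hw₂ hd
  have hKQ0 : (0:ℝ) ≤ 2 * M * n := by positivity
  by_cases hi : i = 1
  · subst hi
    rw [stereo_apply_one, stereo_apply_one]
    have key : (if s then (1:ℝ) else -1) * ((Q w₁ - 2) / Q w₁)
        - (if s then (1:ℝ) else -1) * ((Q w₂ - 2) / Q w₂)
        = (if s then (1:ℝ) else -1) * (2 * (Q w₁ - Q w₂) / (Q w₁ * Q w₂)) := by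
      cases s <;>
      · simp only [if_true, if_false, Bool.false_eq_true]
        field_simp
        ring
    rw [key, abs_mul]
    have h1 : |if s then (1:ℝ) else -1| = 1 := by cases s <;> simp
    rw [h1, one_mul, abs_div, abs_mul, abs_two]
    have hden : (1:ℝ) ≤ |Q w₁ * Q w₂| := by
      rw [abs_of_pos (by positivity)]
      nlinarith
    have h2 : 2 * |Q w₁ - Q w₂| / |Q w₁ * Q w₂| ≤ 2 * |Q w₁ - Q w₂| :=
      div_le_self (by positivity) hden
    have h3 : 2 * |Q w₁ - Q w₂| ≤ 2 * (2 * M * n * Dd) := by linarith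
    have h4 : (0:ℝ) ≤ 2 * M * (2 * M * ↑n) * Dd := by positivity
    have h5 : (0:ℝ) ≤ 2 * Dd := by positivity
    nlinarith
  · rw [stereo_apply_ne s w₁ hi, stereo_apply_ne s w₂ hi]
    set a₁ := w₁ ⟨i, hi⟩ with ha₁
    set a₂ := w₂ ⟨i, hi⟩ with ha₂
    have split : 2 * a₁ / Q w₁ - 2 * a₂ / Q w₂
        = 2 * (a₁ - a₂) / Q w₁ + 2 * a₂ * (Q w₂ - Q w₁) / (Q w₁ * Q w₂) := by
      field_simp
      ring
    rw [split]
    have hb1 : |2 * (a₁ - a₂) / Q w₁| ≤ 2 * Dd := by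
      rw [abs_div, abs_of_pos hQ1pos, abs_mul, abs_two]
      have := div_le_self (by positivity : (0:ℝ) ≤ 2 * |a₁ - a₂|) hQ1
      have h' : 2 * |a₁ - a₂| ≤ 2 * Dd := by linarith [hd ⟨i, hi⟩]
      linarith
    have hb2 : |2 * a₂ * (Q w₂ - Q w₁) / (Q w₁ * Q w₂)| ≤ 2 * M * (2 * M * n * Dd) := by
      rw [abs_div]
      have hden : (1:ℝ) ≤ |Q w₁ * Q w₂| := by
        rw [abs_of_pos (by positivity)]
        nlinarith
      have hnum : |2 * a₂ * (Q w₂ - Q w₁)| ≤ 2 * M * (2 * M * n * Dd) := by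
        rw [abs_mul, abs_mul, abs_two]
        have h1' : |a₂| ≤ M := hw₂ ⟨i, hi⟩
        have h2' : |Q w₂ - Q w₁| ≤ 2 * M * n * Dd := by
          rw [abs_sub_comm]; exact hQd
        have hmm := mul_le_mul h1' h2' (abs_nonneg _) hM
        nlinarith [abs_nonneg a₂, abs_nonneg (Q w₂ - Q w₁)]
      have := div_le_self (abs_nonneg (2 * a₂ * (Q w₂ - Q w₁))) hden
      linarith
    calc |2 * (a₁ - a₂) / Q w₁ + 2 * a₂ * (Q w₂ - Q w₁) / (Q w₁ * Q w₂)|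
        ≤ |2 * (a₁ - a₂) / Q w₁| + |2 * a₂ * (Q w₂ - Q w₁) / (Q w₁ * Q w₂)| := abs_add_le _ _
    _ ≤ 2 * Dd + 2 * M * (2 * M * n * Dd) := by linarith
    _ ≤ (2 + 2 * M * (2 * M * n) + 2 * (2 * M * n)) * Dd := by nlinarith

lemma psi_lip (h01 : (0 : Fin n) ≠ 1) (s : Bool) (m : ℕ) :
    ∃ C : NNReal, LipschitzOnWith C (psi h01 s) (D h01 m) := by
  classical
  set δ : ℝ := 1 / (m + 2) with hδdef
  have hδ : 0 < δ := by positivity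
  have hδ1 : δ ≤ 1 := by
    rw [hδdef, div_le_one (by positivity)]
    have : (0:ℝ) ≤ (m:ℝ) := Nat.cast_nonneg m
    linarith
  set CB : ℝ := 2 + 2 * m * (2 * m * n) + 2 * (2 * m * n) with hCB
  set Ctot : ℝ := 1 + 2 / δ * (n * (2 * m + 3)) + n * CB with hCtot
  refine ⟨Real.toNNReal Ctot, ?_⟩
  rw [lipschitzOnWith_iff_dist_le_mul]
  intro v hv w hw
  obtain ⟨hv1, hv2⟩ := hv
  obtain ⟨hw1, hw2⟩ := hw
  set j0 : {i : Fin n // i ≠ 1} := ⟨0, h01⟩ with hj0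
  set u₁ := Function.update v j0 0 with hu₁
  set u₂ := Function.update w j0 0 with hu₂
  have hm0 : (0:ℝ) ≤ (m:ℝ) := Nat.cast_nonneg m
  have hdist0 : (0:ℝ) ≤ dist v w := dist_nonneg
  have hcoord : ∀ j, |v j - w j| ≤ dist v w := by
    intro j
    have := dist_le_pi_dist v w j
    rwa [Real.dist_eq] at this
  have hu₁b : ∀ j, |u₁ j| ≤ (m:ℝ) := by
    intro j
    by_cases hj : j = j0
    · subst hj; rw [hu₁, Function.update_self]; simpa using hm0
    · rw [hu₁, Function.update_of_ne hj]; exact hv1 j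
  have hu₂b : ∀ j, |u₂ j| ≤ (m:ℝ) := by
    intro j
    by_cases hj : j = j0
    · subst hj; rw [hu₂, Function.update_self]; simpa using hm0
    · rw [hu₂, Function.update_of_ne hj]; exact hw1 j
  have hud : ∀ j, |u₁ j - u₂ j| ≤ dist v w := by
    intro j
    by_cases hj : j = j0
    · subst hj; rw [hu₁, hu₂, Function.update_self, Function.update_self]
      simpa using hdist0
    · rw [hu₁, hu₂, Function.update_of_ne hj, Function.update_of_ne hj]
      exact hcoord j
  set f₁ := Real.sqrt (1 - (v j0) ^ 2) with hf₁
  set f₂ := Real.sqrt (1 - (w j0) ^ 2) with hf₂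
  set G₁ := stereo s u₁ with hG₁
  set G₂ := stereo s u₂ with hG₂
  have hsplit : psi h01 s v - psi h01 s w
      = ((v j0 - w j0) • EuclideanSpace.single (0 : Fin n) (1:ℝ))
        + ((f₁ - f₂) • G₁ + f₂ • (G₁ - G₂)) := by
    rw [psi, psi, ← hu₁, ← hu₂, ← hf₁, ← hf₂, ← hG₁, ← hG₂, ← hj0]
    module
  have hn1 : ‖(v j0 - w j0) • EuclideanSpace.single (0 : Fin n) (1:ℝ)‖ ≤ dist v w := by
    rw [norm_smul, EuclideanSpace.norm_single, norm_one, mul_one, Real.norm_eq_abs]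
    exact hcoord j0
  have hf12 : |f₁ - f₂| ≤ 2 / δ * dist v w := by
    have hlip := sqrt_one_sub_sq_lip hδ hδ1 hv2 hw2
    have h2δ : (0:ℝ) ≤ 2 / δ := by positivity
    calc |f₁ - f₂| ≤ 2 / δ * |v j0 - w j0| := hlip
    _ ≤ 2 / δ * dist v w := mul_le_mul_of_nonneg_left (hcoord j0) h2δ
  have hG₁n : ‖G₁‖ ≤ n * (2 * m + 3) :=
    norm_le_card_mul _ (by positivity) (stereo_bound_coord s u₁ hm0 hu₁b)
  have hf₂1 : |f₂| ≤ 1 := by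
    rw [hf₂, abs_of_nonneg (Real.sqrt_nonneg _)]
    exact Real.sqrt_le_one.mpr (by nlinarith [sq_nonneg (w j0)])
  have hGdiff : ‖G₁ - G₂‖ ≤ n * (CB * dist v w) := by
    refine norm_le_card_mul _ (by positivity) fun i => ?_
    have happ : (G₁ - G₂) i = G₁ i - G₂ i := rfl
    rw [happ]
    exact stereo_diff_coord s u₁ u₂ hm0 hdist0 hu₁b hu₂b hud i
  have htotal : dist (psi h01 s v) (psi h01 s w) ≤ Ctot * dist v w := by
    rw [dist_eq_norm, hsplit]
    calc ‖((v j0 - w j0) • EuclideanSpace.single (0 : Fin n) (1:ℝ))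
        + ((f₁ - f₂) • G₁ + f₂ • (G₁ - G₂))‖
        ≤ ‖(v j0 - w j0) • EuclideanSpace.single (0 : Fin n) (1:ℝ)‖
          + (‖(f₁ - f₂) • G₁‖ + ‖f₂ • (G₁ - G₂)‖) :=
          le_trans (norm_add_le _ _) (by gcongr; exact norm_add_le _ _)
    _ ≤ dist v w + (2 / δ * dist v w * (n * (2 * m + 3)) + 1 * (n * (CB * dist v w))) := by
          have e1 : ‖(f₁ - f₂) • G₁‖ = |f₁ - f₂| * ‖G₁‖ := by
            rw [norm_smul, Real.norm_eq_abs]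
          have e2 : ‖f₂ • (G₁ - G₂)‖ = |f₂| * ‖G₁ - G₂‖ := by
            rw [norm_smul, Real.norm_eq_abs]
          rw [e1, e2]
          exact add_le_add hn1 (add_le_add
            (mul_le_mul hf12 hG₁n (norm_nonneg _) (by positivity))
            (mul_le_mul hf₂1 hGdiff (norm_nonneg _) (by norm_num)))
    _ = Ctot * dist v w := by rw [hCtot]; ring
  calc dist (psi h01 s v) (psi h01 s w) ≤ Ctot * dist v w := htotal
  _ ≤ (Real.toNNReal Ctot : ℝ) * dist v w := by
      apply mul_le_mul_of_nonneg_right _ hdist0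
      rw [Real.coe_toNNReal']
      exact le_max_left _ _

lemma coverage (h01 : (0 : Fin n) ≠ 1) (x : EuclideanSpace ℝ (Fin n)) (hx : ‖x‖ = 1)
    (h1 : x ≠ EuclideanSpace.single 0 (1:ℝ)) (h2 : x ≠ -EuclideanSpace.single 0 (1:ℝ)) :
    ∃ s v, v ⟨0, h01⟩ = x 0 ∧ (∃ m, v ∈ D h01 m) ∧ psi h01 s v = x := by
  classical
  have hsum : ∑ i, x i ^ 2 = 1 := by
    have h2' : Real.sqrt (∑ i, ‖x i‖ ^ 2) = 1 := (EuclideanSpace.norm_eq x) ▸ hx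
    rw [Real.sqrt_eq_one] at h2'
    simpa [Real.norm_eq_abs, sq_abs] using h2'
  set t := x 0 with htdef
  have hrest : ∑ i ∈ univ.erase 0, x i ^ 2 = 1 - t ^ 2 := by
    have h : t ^ 2 + ∑ i ∈ univ.erase 0, x i ^ 2 = 1 := by
      rw [← hsum]; exact Finset.add_sum_erase univ (fun i => x i ^ 2) (Finset.mem_univ 0)
    linarith
  have hrest_nonneg : (0:ℝ) ≤ ∑ i ∈ univ.erase 0, x i ^ 2 :=
    Finset.sum_nonneg fun i _ => sq_nonneg _
  have ht2 : t ^ 2 < 1 := by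
    rcases lt_or_ge (t ^ 2) 1 with h | h
    · exact h
    exfalso
    have heq : t ^ 2 = 1 := le_antisymm (by linarith) h
    have hzero : ∀ i ∈ univ.erase (0 : Fin n), x i ^ 2 = 0 := by
      rw [← Finset.sum_eq_zero_iff_of_nonneg fun i _ => sq_nonneg (x i)]
      rw [hrest, heq]; ring
    have hco : ∀ i : Fin n, i ≠ 0 → x i = 0 := fun i hi =>
      pow_eq_zero_iff (n := 2) (by norm_num) |>.mp
        (hzero i (Finset.mem_erase.mpr ⟨hi, Finset.mem_univ i⟩))
    have ht1 : t = 1 ∨ t = -1 := by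
      have hfac : (t - 1) * (t + 1) = 0 := by nlinarith
      rcases mul_eq_zero.mp hfac with h' | h'
      · exact Or.inl (by linarith)
      · exact Or.inr (by linarith)
    rcases ht1 with h' | h'
    · apply h1
      ext i
      by_cases hi : i = 0
      · subst hi; simp [EuclideanSpace.single_apply, ← htdef, h']
      · rw [hco i hi, EuclideanSpace.single_apply, if_neg hi]
    · apply h2
      ext i
      have happ : (-EuclideanSpace.single (0:Fin n) (1:ℝ)) i =
          -(EuclideanSpace.single (0:Fin n) (1:ℝ)) i := rfl
      by_cases hi : i = 0
      · subst hi; rw [happ, EuclideanSpace.single_apply, if_pos rfl, ← htdef, h']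
      · rw [hco i hi, happ, EuclideanSpace.single_apply, if_neg hi, neg_zero]
  -- basic quantities
  set r := Real.sqrt (1 - t ^ 2) with hrdef
  have hr2 : r ^ 2 = 1 - t ^ 2 := Real.sq_sqrt (by linarith)
  have hrpos : 0 < r := Real.sqrt_pos.mpr (by linarith)
  have h10 : (1 : Fin n) ≠ 0 := fun h => h01 h.symm
  have h1mem : (1 : Fin n) ∈ univ.erase (0 : Fin n) := mem_erase.mpr ⟨h10, mem_univ _⟩
  have hx1sq : x 1 ^ 2 ≤ 1 - t ^ 2 := by
    rw [← hrest]
    exact Finset.single_le_sum (fun i _ => sq_nonneg (x i)) h1mem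
  have hx1r : x 1 ≤ r := by nlinarith
  set e : ℝ := if x 1 = r then -1 else 1 with hedef
  set s : Bool := if x 1 = r then false else true with hsdef
  have hse : (if s then (1:ℝ) else -1) = e := by
    by_cases hc : x 1 = r <;> simp [hsdef, hedef, hc]
  have he2 : e ^ 2 = 1 := by
    by_cases hc : x 1 = r <;> simp [hedef, hc]
  set Dp : ℝ := 1 - e * (x 1 / r) with hDdef
  have hDpos : 0 < Dp := by
    by_cases hc : x 1 = r
    · rw [hDdef, hedef, if_pos hc, hc, div_self hrpos.ne']; norm_num
    · rw [hDdef, hedef, if_neg hc]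
      have : x 1 / r < 1 := (div_lt_one hrpos).mpr (lt_of_le_of_ne hx1r hc)
      linarith
  set c := r * Dp with hcdef
  have hcpos : 0 < c := mul_pos hrpos hDpos
  set v : {i : Fin n // i ≠ 1} → ℝ := fun j => if j = ⟨0, h01⟩ then t else x j / c
    with hvdef
  have hv0 : v ⟨0, h01⟩ = t := if_pos rfl
  refine ⟨s, v, hv0, ?_, ?_⟩
  · -- choice of the box
    have habs : |t| < 1 := (sq_lt_one_iff_abs_lt_one t).mp ht2
    obtain ⟨m1, hm1⟩ := exists_nat_ge (dist v 0)
    obtain ⟨m2, hm2⟩ := exists_nat_ge (1 / (1 - |t|))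
    have hcast : ((m1 + m2 : ℕ) : ℝ) = (m1 : ℝ) + (m2 : ℝ) := by push_cast; ring
    refine ⟨m1 + m2, fun j => ?_, ?_⟩
    · have hj : dist (v j) 0 ≤ dist v 0 := by
        simpa using dist_le_pi_dist v 0 j
      rw [Real.dist_eq, sub_zero] at hj
      have h2' : (0:ℝ) ≤ m2 := Nat.cast_nonneg m2
      rw [hcast]; linarith
    · rw [hv0]
      have hpos : 0 < 1 - |t| := by linarith
      have hMpos : (0:ℝ) < 1 / (1 - |t|) := by positivity
      have hM : (1:ℝ) / (1 - |t|) ≤ ((m1 + m2 : ℕ) : ℝ) + 2 := by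
        rw [hcast]
        have h1' : (0:ℝ) ≤ m1 := Nat.cast_nonneg m1
        linarith
      have hfin := one_div_le_one_div_of_le hMpos hM
      rw [one_div_one_div] at hfin
      linarith
  · -- the identity psi s v = x
    set u := Function.update v ⟨0, h01⟩ 0 with hudef
    have hu0 : u ⟨0, h01⟩ = 0 := Function.update_self _ _ _
    have huj : ∀ j : {i : Fin n // i ≠ 1}, j ≠ ⟨0, h01⟩ → u j = x j / c := by
      intro j hj
      rw [hudef, Function.update_of_ne hj, hvdef]
      exact if_neg hj
    -- the sum computation
    have hg : ∀ j : {i : Fin n // i ≠ 1},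
        u j ^ 2 = (fun i : Fin n => (if i = 0 then 0 else x i / c) ^ 2) j := by
      intro j
      by_cases hj : j = ⟨0, h01⟩
      · have : (j : Fin n) = 0 := by rw [hj]
        rw [hj, hu0]
        simp [this]
      · have hne : (j : Fin n) ≠ 0 := fun h => hj (Subtype.ext h)
        rw [huj j hj]
        simp [hne]
    have hsum_u : ∑ j, u j ^ 2
        = ∑ i ∈ univ.erase 1, (if i = 0 then 0 else x i / c) ^ 2 := by
      rw [Finset.sum_congr rfl fun j _ => hg j]
      exact (Finset.sum_subtype (p := fun i : Fin n => i ≠ 1) (univ.erase 1)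
        (by intro i; simp) (fun i : Fin n => (if i = 0 then 0 else x i / c) ^ 2)).symm
    have hsum_u2 : ∑ j, u j ^ 2 = ∑ i ∈ (univ.erase 1).erase 0, (x i / c) ^ 2 := by
      rw [hsum_u, ← Finset.sum_erase (f := fun i : Fin n => (if i = 0 then 0 else x i / c) ^ 2)
        (univ.erase 1) (a := 0) (by simp)]
      refine Finset.sum_congr rfl fun i hi => ?_
      rw [if_neg (Finset.ne_of_mem_erase hi)]
    have hS : ∑ i ∈ (univ.erase 1).erase 0, x i ^ 2 = 1 - t ^ 2 - x 1 ^ 2 := by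
      have h := Finset.add_sum_erase ((univ : Finset (Fin n)).erase 0)
        (fun i => x i ^ 2) h1mem
      rw [hrest] at h
      rw [Finset.erase_right_comm]
      simp only at h
      linarith
    have hsum_u3 : ∑ j, u j ^ 2 = (1 - t ^ 2 - x 1 ^ 2) / c ^ 2 := by
      rw [hsum_u2]
      rw [Finset.sum_congr rfl fun i _ => div_pow (x i) c 2]
      rw [← Finset.sum_div, hS]
    have hrd : r - e * x 1 = c := by
      rw [hcdef, hDdef]
      field_simp
    have hnum : 1 - t ^ 2 - x 1 ^ 2 = c * (r + e * x 1) := by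
      rw [← hrd, ← hr2]
      linear_combination (x 1 : ℝ) ^ 2 * he2
    have hQ : Q u = 2 / Dp := by
      rw [Q, hsum_u3, hnum, pow_two, mul_div_mul_left _ _ hcpos.ne',
        div_add_one hcpos.ne']
      have h3' : r + e * x 1 + c = 2 * r := by rw [← hrd]; ring
      rw [h3', hcdef, show (2:ℝ) * r = r * 2 by ring, mul_div_mul_left _ _ hrpos.ne']
    have hQpos : 0 < Q u := by rw [hQ]; positivity
    have hvsqrt : Real.sqrt (1 - v ⟨0, h01⟩ ^ 2) = r := by rw [hv0, hrdef]
    ext i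
    have happ : psi h01 s v i
        = v ⟨0, h01⟩ * (EuclideanSpace.single (0:Fin n) (1:ℝ)) i
          + r * stereo s u i := by
      rw [psi, hvsqrt]
      rfl
    by_cases hi1 : i = 1
    · subst hi1
      rw [happ, EuclideanSpace.single_apply, if_neg h10, mul_zero, zero_add,
        stereo_apply_one, hse, hQ]
      have h2D : (2 / Dp - 2) / (2 / Dp) = 1 - Dp := by
        field_simp
      rw [h2D, hDdef]
      field_simp
      linear_combination (x 1 : ℝ) * he2
    by_cases hi0 : i = 0
    · subst hi0
      rw [happ, EuclideanSpace.single_apply, if_pos rfl, mul_one,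
        stereo_apply_ne s u h01, hu0]
      rw [hv0]
      field_simp
      rw [htdef]; ring
    · rw [happ, EuclideanSpace.single_apply, if_neg hi0, mul_zero, zero_add,
        stereo_apply_ne s u hi1, huj ⟨i, hi1⟩ (fun h => hi0 (congrArg Subtype.val h)), hQ]
      field_simp
      ring

lemma key (hn : 2 ≤ n) (N : Set ℝ) (hN : volume N = 0) :
    μH[(n : ℝ) - 1] {x : EuclideanSpace ℝ (Fin n) |
      x ∈ Metric.sphere (0 : EuclideanSpace ℝ (Fin n)) 1 ∧ x 0 ∈ N} = 0 := by
  have h01 : (0 : Fin n) ≠ 1 := by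
    intro h
    have hv := congrArg Fin.val h
    have h0 : ((0 : Fin n) : ℕ) = 0 := rfl
    have h1 : ((1 : Fin n) : ℕ) = 1 % n := rfl
    rw [h0, h1, Nat.mod_eq_of_lt (by omega)] at hv
    omega
  set d : ℝ := (n : ℝ) - 1 with hd
  have hd0 : 0 < d := by
    rw [hd]
    have : (2 : ℝ) ≤ (n : ℝ) := by exact_mod_cast hn
    linarith
  haveI := MeasureTheory.Measure.noAtoms_hausdorff (EuclideanSpace ℝ (Fin n)) hd0
  have hcard : ((Fintype.card {i : Fin n // i ≠ 1} : ℕ) : ℝ) = d := by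
    have h : Fintype.card {i : Fin n // i ≠ 1} = n - 1 := by
      simp [Fintype.card_subtype_compl]
    rw [h, Nat.cast_sub (by omega), Nat.cast_one, hd]
  have hdom : (μH[d] : Measure ({i : Fin n // i ≠ 1} → ℝ)) = volume := by
    rw [← hcard]; exact hausdorffMeasure_pi_real
  have hsub : {x : EuclideanSpace ℝ (Fin n) |
      x ∈ Metric.sphere (0 : EuclideanSpace ℝ (Fin n)) 1 ∧ x 0 ∈ N} ⊆
      {EuclideanSpace.single 0 (1:ℝ), -EuclideanSpace.single 0 (1:ℝ)} ∪
      ⋃ p : Bool × ℕ, psi h01 p.1 '' (D h01 p.2 ∩ {v | v ⟨0, h01⟩ ∈ N}) := by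
    rintro x ⟨hx, hxN⟩
    by_cases h1 : x = EuclideanSpace.single 0 (1:ℝ)
    · exact Or.inl (Or.inl h1)
    by_cases h2 : x = -EuclideanSpace.single 0 (1:ℝ)
    · exact Or.inl (Or.inr h2)
    right
    obtain ⟨s, v, hv0, ⟨m, hm⟩, hpsi⟩ :=
      coverage h01 x (by simpa using hx) h1 h2
    exact Set.mem_iUnion.2 ⟨(s, m), ⟨v, ⟨hm, by rw [Set.mem_setOf_eq, hv0]; exact hxN⟩, hpsi⟩⟩
  refine le_antisymm (le_trans (measure_mono hsub) ?_) (zero_le)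
  refine le_trans (measure_union_le _ _) ?_
  have hpair : μH[d] ({EuclideanSpace.single 0 (1:ℝ), -EuclideanSpace.single 0 (1:ℝ)} :
      Set (EuclideanSpace ℝ (Fin n))) = 0 := by
    have hle : μH[d] ({EuclideanSpace.single 0 (1:ℝ), -EuclideanSpace.single 0 (1:ℝ)} :
        Set (EuclideanSpace ℝ (Fin n))) ≤
        μH[d] ({EuclideanSpace.single 0 (1:ℝ)} : Set (EuclideanSpace ℝ (Fin n))) +
        μH[d] ({-EuclideanSpace.single 0 (1:ℝ)} : Set (EuclideanSpace ℝ (Fin n))) := by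
      rw [Set.insert_eq]
      exact measure_union_le _ _
    refine le_antisymm (hle.trans ?_) (zero_le)
    rw [measure_singleton, measure_singleton, add_zero]
  have hUnion : μH[d] (⋃ p : Bool × ℕ,
      psi h01 p.1 '' (D h01 p.2 ∩ {v | v ⟨0, h01⟩ ∈ N})) = 0 := by
    refine measure_iUnion_null fun p => ?_
    obtain ⟨C, hC⟩ := psi_lip h01 p.1 p.2
    have him := (hC.mono (Set.inter_subset_left (t := {v | v ⟨0, h01⟩ ∈ N}))).hausdorffMeasure_image_le hd0.le
    have hzero : μH[d] (D h01 p.2 ∩ {v | v ⟨0, h01⟩ ∈ N}) = 0 := by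
      rw [hdom]
      refine measure_mono_null Set.inter_subset_right ?_
      rw [volume_pi]
      exact Measure.pi_eval_preimage_null _ hN
    refine le_antisymm (him.trans ?_) (zero_le)
    rw [hzero, mul_zero]
  rw [hpair, hUnion, add_zero]

end SphereAC

/-- The pushforward of the surface measure of the unit sphere under
`η ↦ ⟪ω, η⟫` is absolutely continuous with respect to Lebesgue measure. -/
theorem map_inner_sphereMeasure_absolutelyContinuous (n : ℕ) (hn : 2 ≤ n)
    (ω : EuclideanSpace ℝ (Fin n)) (hω : ‖ω‖ = 1) :
    (sphereMeasure n).map (fun η => (inner ℝ ω η : ℝ)) ≪ (volume : Measure ℝ) := by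
  haveI : NeZero n := ⟨by omega⟩
  have hmeas : Measurable fun η : EuclideanSpace ℝ (Fin n) => (inner ℝ ω η : ℝ) :=
    (continuous_const.inner continuous_id).measurable
  refine Measure.AbsolutelyContinuous.mk fun N hNm hN => ?_
  rw [sphereMeasure, Measure.map_apply hmeas hNm,
    Measure.restrict_apply (hmeas hNm)]
  -- orthonormal basis with `b 0 = ω`
  have hcard : Module.finrank ℝ (EuclideanSpace ℝ (Fin n)) = Fintype.card (Fin n) := by simp
  have horth : Orthonormal ℝ (Set.restrict {(0 : Fin n)} fun _ => ω) := by
    constructor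
    · intro i; simpa [Set.restrict] using hω
    · rintro ⟨i, hi⟩ ⟨j, hj⟩ hij
      exact absurd (Subtype.ext ((hi.trans hj.symm : i = j))) hij
  obtain ⟨b, hb⟩ := horth.exists_orthonormalBasis_extension_of_card_eq hcard
  have hb0 : b 0 = ω := hb 0 rfl
  set T := b.repr with hT
  have hset : ((fun η : EuclideanSpace ℝ (Fin n) => (inner ℝ ω η : ℝ)) ⁻¹' N) ∩
      Metric.sphere 0 1 = T.toIsometryEquiv ⁻¹'
        {x : EuclideanSpace ℝ (Fin n) | x ∈ Metric.sphere (0:EuclideanSpace ℝ (Fin n)) 1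
          ∧ x 0 ∈ N} := by
    ext η
    have h1 : (T η) 0 = (inner ℝ ω η : ℝ) := by
      rw [← hb0]; exact b.repr_apply_apply η 0
    simp only [Set.mem_inter_iff, Set.mem_preimage, Set.mem_setOf_eq, mem_sphere_iff_norm,
      sub_zero, LinearIsometryEquiv.coe_toIsometryEquiv]
    rw [h1]
    constructor
    · rintro ⟨hN', hs⟩; exact ⟨by simpa using T.norm_map η ▸ hs, hN'⟩
    · rintro ⟨hs, hN'⟩; refine ⟨hN', ?_⟩
      have := T.norm_map η
      simpa [this] using hs
  rw [hset, IsometryEquiv.hausdorffMeasure_preimage]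
  exact SphereAC.key hn N hN
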